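/- Let g₀ ∈ Matₙ(ℝ) be symmetric and positive definite, let A ∈ Matₙ(ℝ) with tr(A) = 0, let f : ℝ → ℝ be a twice differentiable function, and define g(u) := exp(f(u)·A)·g₀·exp(f(u)·Aᵀ). Then for every u ∈ ℝ, tr( (1/4)·(g(u)⁻¹·g'(u))² − (1/2)·g(u)⁻¹·g''(u) ) = −(1/4)·tr( (A + g₀·Aᵀ·g₀⁻¹)² )·f'(u)². -/

import Mathlib

open Matrix

attribute [local instance] Matrix.frobeniusNormedAddCommGroup Matrix.frobeniusNormedSpace

/-- The reparameterized orbit `g(u) = exp(f(u)A) g₀ exp(f(u)Aᵀ)`. -/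
noncomputable def reparamOrbitCurve {n : ℕ} (g₀ A : Matrix (Fin n) (Fin n) ℝ) (f : ℝ → ℝ) :
    ℝ → Matrix (Fin n) (Fin n) ℝ :=
  fun u => NormedSpace.exp (f u • A) * g₀ * NormedSpace.exp (f u • Aᵀ)

attribute [local instance] Matrix.frobeniusNormedRing Matrix.frobeniusNormedAlgebra

section aux

variable {n : ℕ} (g₀ A : Matrix (Fin n) (Fin n) ℝ) (f f' : ℝ → ℝ)

lemma reparam_hasDerivAt (hf : ∀ u, HasDerivAt f (f' u) u) (u : ℝ) :
    HasDerivAt (reparamOrbitCurve g₀ A f)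
      (f' u • (A * reparamOrbitCurve g₀ A f u + reparamOrbitCurve g₀ A f u * Aᵀ)) u := by
  have hE : HasDerivAt (fun t => NormedSpace.exp (f t • A))
      (f' u • (A * NormedSpace.exp (f u • A))) u :=
    HasDerivAt.scomp u (hasDerivAt_exp_smul_const' (𝕂 := ℝ) A (f u)) (hf u)
  have hF : HasDerivAt (fun t => NormedSpace.exp (f t • Aᵀ))
      (f' u • (NormedSpace.exp (f u • Aᵀ) * Aᵀ)) u :=
    HasDerivAt.scomp u (hasDerivAt_exp_smul_const (𝕂 := ℝ) Aᵀ (f u)) (hf u)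
  have := ((hE.mul_const g₀).mul hF)
  convert this using 1
  · rfl
  · rfl
  · rfl
  · rfl
  simp only [reparamOrbitCurve, smul_add, smul_mul_assoc, mul_smul_comm, mul_assoc]

end aux

set_option maxHeartbeats 1000000

/-- For `g₀` symmetric positive definite, `A` trace-free, `f` twice
differentiable, and `g(u) = exp(f(u)A) g₀ exp(f(u)Aᵀ)`, the Ricci coefficient
`tr((1/4)(g⁻¹g')² − (1/2)g⁻¹g'')` equals `−(1/4) tr((A + g₀Aᵀg₀⁻¹)²) f'(u)²`. -/
theorem ricci_of_reparam_orbit {n : ℕ} (g₀ A : Matrix (Fin n) (Fin n) ℝ)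
    (hsym : g₀ᵀ = g₀) (hpos : g₀.PosDef) (htr : A.trace = 0)
    (f f' f'' : ℝ → ℝ)
    (hf : ∀ u, HasDerivAt f (f' u) u)
    (hf' : ∀ u, HasDerivAt f' (f'' u) u) (u : ℝ) :
    ((1/4 : ℝ) • ((reparamOrbitCurve g₀ A f u)⁻¹ * deriv (reparamOrbitCurve g₀ A f) u) ^ 2 -
     (1/2 : ℝ) • ((reparamOrbitCurve g₀ A f u)⁻¹ *
        deriv (deriv (reparamOrbitCurve g₀ A f)) u)).trace
    = -(1/4) * ((A + g₀ * Aᵀ * g₀⁻¹) ^ 2).trace * f' u ^ 2 := by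
  classical
  set g := reparamOrbitCurve g₀ A f with hgdef
  have hg : ∀ v, HasDerivAt g (f' v • (A * g v + g v * Aᵀ)) v :=
    reparam_hasDerivAt g₀ A f f' hf
  have hderiv1 : deriv g = fun v => f' v • (A * g v + g v * Aᵀ) :=
    funext fun v => (hg v).deriv
  have hg2 : HasDerivAt (fun v => f' v • (A * g v + g v * Aᵀ))
      (f' u • (A * (f' u • (A * g u + g u * Aᵀ)) + (f' u • (A * g u + g u * Aᵀ)) * Aᵀ) +
        f'' u • (A * g u + g u * Aᵀ)) u :=
    (hf' u).smul (((hg u).const_mul A).add ((hg u).mul_const Aᵀ))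
  have hderiv2 : deriv (deriv g) u
      = f' u • (A * (f' u • (A * g u + g u * Aᵀ)) + (f' u • (A * g u + g u * Aᵀ)) * Aᵀ) +
        f'' u • (A * g u + g u * Aᵀ) := by
    rw [hderiv1]; exact hg2.deriv
  -- notation
  set E := NormedSpace.exp (f u • A) with hE
  set F := NormedSpace.exp (f u • Aᵀ) with hF
  have hgu : g u = E * (g₀ * F) := by rw [hgdef]; simp [reparamOrbitCurve, mul_assoc]; rfl
  set gu := g u with hgudef
  set gi := gu⁻¹ with hgidef
  -- invertibility
  have hEunit : IsUnit E := Matrix.isUnit_exp _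
  have hFunit : IsUnit F := Matrix.isUnit_exp _
  have hg0unit : IsUnit g₀ := (Matrix.isUnit_iff_isUnit_det g₀).mpr hpos.det_pos.ne'.isUnit
  have hXunit : IsUnit (g₀ * F) := hg0unit.mul hFunit
  have hguunit : IsUnit gu := by rw [hgu]; exact hEunit.mul hXunit
  have hinv1 : gi * gu = 1 :=
    Matrix.nonsing_inv_mul gu ((Matrix.isUnit_iff_isUnit_det gu).mp hguunit)
  have hinv2 : gu * gi = 1 :=
    Matrix.mul_nonsing_inv gu ((Matrix.isUnit_iff_isUnit_det gu).mp hguunit)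
  have hEinv : E⁻¹ * E = 1 :=
    Matrix.nonsing_inv_mul E ((Matrix.isUnit_iff_isUnit_det E).mp hEunit)
  have hFinv : F * F⁻¹ = 1 :=
    Matrix.mul_nonsing_inv F ((Matrix.isUnit_iff_isUnit_det F).mp hFunit)
  have hg0inv : g₀⁻¹ * g₀ = 1 :=
    Matrix.nonsing_inv_mul g₀ ((Matrix.isUnit_iff_isUnit_det g₀).mp hg0unit)
  -- commutation
  have hcommE : A * E = E * A := (((Commute.refl A).smul_left (f u)).exp_left).symm.eq
  have hcommF : F * Aᵀ = Aᵀ * F := (((Commute.refl Aᵀ).smul_left (f u)).exp_left).eq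
  -- conjugation trace lemma
  have htr_conj : ∀ X : Matrix (Fin n) (Fin n) ℝ, (gi * (X * gu)).trace = X.trace := by
    intro X
    rw [Matrix.trace_mul_comm, mul_assoc, hinv2, mul_one]
  set P := gi * (A * gu) with hPdef
  have hP : P = (g₀ * F)⁻¹ * (A * (g₀ * F)) := by
    rw [hPdef, hgidef, hgu, Matrix.mul_inv_rev]
    have h1 : A * (E * (g₀ * F)) = E * (A * (g₀ * F)) := by
      rw [← mul_assoc, hcommE, mul_assoc]
    simp only [mul_assoc]
    rw [h1, ← mul_assoc E⁻¹ E, hEinv, one_mul]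
  set k := (A * (g₀ * Aᵀ * g₀⁻¹)).trace with hkdef
  set a := (A * A).trace with hadef
  have hXAX : (g₀ * F) * (Aᵀ * (g₀ * F)⁻¹) = g₀ * (Aᵀ * g₀⁻¹) := by
    rw [Matrix.mul_inv_rev]
    calc g₀ * F * (Aᵀ * (F⁻¹ * g₀⁻¹)) = g₀ * ((F * Aᵀ) * (F⁻¹ * g₀⁻¹)) := by
          simp only [mul_assoc]
      _ = g₀ * (Aᵀ * ((F * F⁻¹) * g₀⁻¹)) := by rw [hcommF]; simp only [mul_assoc]
      _ = g₀ * (Aᵀ * g₀⁻¹) := by rw [hFinv, one_mul]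
  have hcross : (P * Aᵀ).trace = k := by
    rw [hP, mul_assoc, Matrix.trace_mul_comm, hkdef]
    calc (A * (g₀ * F) * Aᵀ * (g₀ * F)⁻¹).trace
        = (A * ((g₀ * F) * (Aᵀ * (g₀ * F)⁻¹))).trace := by simp only [mul_assoc]
      _ = (A * (g₀ * Aᵀ * g₀⁻¹)).trace := by rw [hXAX, mul_assoc]
  have hAtAt : (Aᵀ * Aᵀ).trace = a := by
    rw [← Matrix.transpose_mul, Matrix.trace_transpose, hadef]
  -- main trace identities
  have hB : gi * (A * gu + gu * Aᵀ) = P + Aᵀ := by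
    rw [Matrix.mul_add, ← mul_assoc gi gu, hinv1, one_mul]
  have c1 : (gi * (A * (A * gu))).trace = a := by rw [← mul_assoc A A gu, htr_conj]
  have c2 : (gi * (A * (gu * Aᵀ))).trace = k := by
    have h : gi * (A * (gu * Aᵀ)) = P * Aᵀ := by rw [hPdef]; simp only [mul_assoc]
    rw [h, hcross]
  have c3 : (gi * (A * gu * Aᵀ)).trace = k := by
    have h : gi * (A * gu * Aᵀ) = P * Aᵀ := by rw [hPdef]; simp only [mul_assoc]
    rw [h, hcross]
  have c4 : (gi * (gu * Aᵀ * Aᵀ)).trace = a := by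
    have h : gi * (gu * Aᵀ * Aᵀ) = (gi * gu) * (Aᵀ * Aᵀ) := by simp only [mul_assoc]
    rw [h, hinv1, one_mul, hAtAt]
  have c5 : (gi * (A * gu)).trace = 0 := by rw [htr_conj, htr]
  have c6 : (gi * (gu * Aᵀ)).trace = 0 := by
    rw [← mul_assoc, hinv1, one_mul, Matrix.trace_transpose, htr]
  have hPP : P * P = gi * (A * A * gu) := by
    rw [hPdef]
    have h2 : gu * (gi * (A * gu)) = A * gu := by rw [← mul_assoc, hinv2, one_mul]
    simp only [mul_assoc]
    rw [h2]
  have hsq : ((P + Aᵀ) ^ 2).trace = a + k + (k + a) := by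
    rw [pow_two, Matrix.add_mul, Matrix.mul_add, Matrix.mul_add, Matrix.trace_add,
      Matrix.trace_add, Matrix.trace_add, hPP, htr_conj, hcross, hAtAt,
      Matrix.trace_mul_comm Aᵀ P, hcross]
  have hRHS : ((A + g₀ * Aᵀ * g₀⁻¹) ^ 2).trace = a + k + (k + a) := by
    have hCC : (g₀ * Aᵀ * g₀⁻¹ * (g₀ * Aᵀ * g₀⁻¹)).trace = a := by
      calc (g₀ * Aᵀ * g₀⁻¹ * (g₀ * Aᵀ * g₀⁻¹)).trace
          = (g₀ * (Aᵀ * ((g₀⁻¹ * g₀) * (Aᵀ * g₀⁻¹)))).trace := by simp only [mul_assoc]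
        _ = (g₀ * (Aᵀ * (Aᵀ * g₀⁻¹))).trace := by rw [hg0inv, one_mul]
        _ = (Aᵀ * (Aᵀ * g₀⁻¹) * g₀).trace := Matrix.trace_mul_comm _ _
        _ = (Aᵀ * Aᵀ * (g₀⁻¹ * g₀)).trace := by simp only [mul_assoc]
        _ = a := by rw [hg0inv, mul_one, hAtAt]
    have hCA : (g₀ * Aᵀ * g₀⁻¹ * A).trace = k := by
      rw [Matrix.trace_mul_comm, hkdef]
    rw [pow_two, Matrix.add_mul, Matrix.mul_add, Matrix.mul_add, Matrix.trace_add,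
      Matrix.trace_add, Matrix.trace_add, hCC, hCA, hadef, hkdef]
  -- finish
  have sq : gi * deriv g u = f' u • (P + Aᵀ) := by
    simp only [hderiv1]
    rw [mul_smul_comm, hB]
  have sqtr : ((gi * deriv g u) ^ 2).trace = f' u ^ 2 * (a + k + (k + a)) := by
    rw [sq, smul_pow, Matrix.trace_smul, smul_eq_mul, hsq]
  rw [Matrix.trace_sub, Matrix.trace_smul, Matrix.trace_smul, sqtr, hRHS,
    smul_eq_mul, smul_eq_mul, hderiv2]
  simp only [Matrix.mul_add, Matrix.add_mul, mul_smul_comm, smul_mul_assoc, smul_smul,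
    smul_add, Matrix.trace_add, Matrix.trace_smul, smul_eq_mul]
  rw [c1, c2, c3, c4, c5, c6]
  ring
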